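/- Let N be a positive integer and K ≤ N/2, and set p := K/N. Then the partial sum of binomial coefficients satisfies ∑_{k=0}^{K} C(N,k) ≤ 2^{N·h(p)}, where h(p) = -p log₂ p - (1-p) log₂(1-p) is the binary entropy function (with h(0) := 0). -/

import Mathlib

/-- Binary entropy with base-2 logarithms (with `h 0 = 0` since `logb 2 0 = 0`). -/
noncomputable def binEnt (p : ℝ) : ℝ := -p * Real.logb 2 p - (1 - p) * Real.logb 2 (1 - p)

theorem stmt2 (N K : ℕ) (hN : 0 < N) (hK : (K : ℝ) ≤ (N : ℝ) / 2) :
    (∑ k ∈ Finset.range (K + 1), (N.choose k : ℝ)) ≤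
      (2 : ℝ) ^ ((N : ℝ) * binEnt ((K : ℝ) / (N : ℝ))) := by
  have hNR : (0 : ℝ) < (N : ℝ) := by exact_mod_cast hN
  rcases Nat.eq_zero_or_pos K with hK0 | hKpos
  · subst hK0
    simp [binEnt, Real.logb]
  set p : ℝ := (K : ℝ) / (N : ℝ) with hp
  have hp0 : 0 < p := div_pos (by exact_mod_cast hKpos) hNR
  have hphalf : p ≤ 1 / 2 := by
    rw [hp, div_le_div_iff₀ hNR (by norm_num)]
    linarith
  have hq0 : 0 < 1 - p := by linarith
  have hKN : K ≤ N := by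
    have : (K : ℝ) ≤ (N : ℝ) := le_trans hK (by linarith)
    exact_mod_cast this
  have hNp : (N : ℝ) * p = (K : ℝ) := by
    rw [hp]; field_simp [hNR.ne']
  have hNq : (N : ℝ) * (1 - p) = ((N - K : ℕ) : ℝ) := by
    rw [Nat.cast_sub hKN, ← hNp]; ring
  -- weighted partial sum ≤ 1
  have hfull : ∑ k ∈ Finset.range (N + 1),
      (N.choose k : ℝ) * p ^ k * (1 - p) ^ (N - k) = 1 := by
    have h := add_pow p (1 - p) N
    have h1 : p + (1 - p) = 1 := by ring
    rw [h1, one_pow] at h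
    conv_rhs => rw [h]
    apply Finset.sum_congr rfl
    intro k _
    ring
  have hpartial : ∑ k ∈ Finset.range (K + 1),
      (N.choose k : ℝ) * p ^ k * (1 - p) ^ (N - k) ≤ 1 := by
    conv_rhs => rw [← hfull]
    apply Finset.sum_le_sum_of_subset_of_nonneg
    · exact Finset.range_subset_range.2 (by omega)
    · intro k _ _
      positivity
  have hterm : ∀ k ∈ Finset.range (K + 1),
      (N.choose k : ℝ) * (p ^ K * (1 - p) ^ (N - K)) ≤
      (N.choose k : ℝ) * p ^ k * (1 - p) ^ (N - k) := by
    intro k hk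
    rw [Finset.mem_range] at hk
    have hkK : k ≤ K := by omega
    have h1 : p ^ K = p ^ k * p ^ (K - k) := by
      rw [← pow_add]; congr 1; omega
    have h2 : (1 - p) ^ (N - k) = (1 - p) ^ (N - K) * (1 - p) ^ (K - k) := by
      rw [← pow_add]; congr 1; omega
    have hple : p ^ (K - k) ≤ (1 - p) ^ (K - k) :=
      pow_le_pow_left₀ hp0.le (by linarith) _
    calc (N.choose k : ℝ) * (p ^ K * (1 - p) ^ (N - K))
        = ((N.choose k : ℝ) * p ^ k * (1 - p) ^ (N - K)) * p ^ (K - k) := by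
          rw [h1]; ring
      _ ≤ ((N.choose k : ℝ) * p ^ k * (1 - p) ^ (N - K)) * (1 - p) ^ (K - k) :=
          mul_le_mul_of_nonneg_left hple (by positivity)
      _ = (N.choose k : ℝ) * p ^ k * (1 - p) ^ (N - k) := by
          rw [h2]; ring
  have hw : (0 : ℝ) < p ^ K * (1 - p) ^ (N - K) := by positivity
  have hsum : (∑ k ∈ Finset.range (K + 1), (N.choose k : ℝ)) ≤
      (p ^ K * (1 - p) ^ (N - K))⁻¹ := by
    rw [← one_div, le_div_iff₀ hw, Finset.sum_mul]
    exact le_trans (Finset.sum_le_sum hterm) hpartial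
  refine hsum.trans (le_of_eq ?_)
  have hexp : (N : ℝ) * binEnt p =
      (-(K : ℝ)) * Real.logb 2 p + (-((N - K : ℕ) : ℝ)) * Real.logb 2 (1 - p) := by
    have h : (N : ℝ) * binEnt p =
        -((N : ℝ) * p) * Real.logb 2 p + -((N : ℝ) * (1 - p)) * Real.logb 2 (1 - p) := by
      rw [binEnt]; ring
    rw [h, hNp, hNq]
  rw [hexp, Real.rpow_add (by norm_num : (0:ℝ) < 2)]
  have e1 : (2 : ℝ) ^ ((-(K : ℝ)) * Real.logb 2 p) = (p ^ K)⁻¹ := by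
    rw [mul_comm, Real.rpow_mul (by norm_num : (0:ℝ) ≤ 2),
      Real.rpow_logb (by norm_num) (by norm_num) hp0,
      Real.rpow_neg hp0.le, Real.rpow_natCast]
  have e2 : (2 : ℝ) ^ ((-((N - K : ℕ) : ℝ)) * Real.logb 2 (1 - p)) = ((1 - p) ^ (N - K))⁻¹ := by
    rw [mul_comm, Real.rpow_mul (by norm_num : (0:ℝ) ≤ 2),
      Real.rpow_logb (by norm_num) (by norm_num) hq0,
      Real.rpow_neg hq0.le, Real.rpow_natCast]
  rw [mul_inv, e1, e2]
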